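/- Eigenvalue exclusion for the double ansatz space: let P(λ) be a regular n×n matrix polynomial of degree k ≥ 2 and let ℒ(λ) ∈ 𝔻𝕄(P) = 𝕄₁(P) ∩ 𝕄₂(P) with ansatz vector v ∈ ℝ^k. If ℒ(λ) is a strong linearization of P(λ), then no root of the scalar polynomial Φ_k(λ)^T v coincides with a (finite) eigenvalue of P(λ), i.e., for every α ∈ ℂ with det P(α) = 0 one has Φ_k(α)^T v ≠ 0; moreover, if ∞ is an eigenvalue of P(λ) (det (rev_k P)(0) = 0), then the first component v₁ of v (the component multiplying φ_{k−1}) is nonzero. -/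

import Mathlib

open Polynomial Matrix

noncomputable section

/-- `Φ_k(λ) ⊗ I_n` as a `kn × n` polynomial matrix: its `i`-th block row (0-based)
is `φ_{k-1-i}(λ) I_n`. -/
def PhiMat (n k : ℕ) (φ : ℕ → Polynomial ℝ) :
    Matrix (Fin k × Fin n) (Fin n) (Polynomial ℝ) :=
  Matrix.of fun p s => if p.2 = s then φ (k - 1 - p.1.val) else 0

/-- The matrix polynomial `P(λ) = Σ_{i=0}^k P_i φ_i(λ)`. -/
def matP (n k : ℕ) (φ : ℕ → Polynomial ℝ) (Pm : ℕ → Matrix (Fin n) (Fin n) ℝ) :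
    Matrix (Fin n) (Fin n) (Polynomial ℝ) :=
  Matrix.of fun r s => ∑ i ∈ Finset.range (k + 1), C (Pm i r s) * φ i

/-- `v ⊗ Q` as a `kn × n` polynomial matrix. -/
def vKron (n k : ℕ) (v : Fin k → ℝ) (Q : Matrix (Fin n) (Fin n) (Polynomial ℝ)) :
    Matrix (Fin k × Fin n) (Fin n) (Polynomial ℝ) :=
  Matrix.of fun p s => C (v p.1) * Q p.2 s

/-- `v^T ⊗ Q` as an `n × kn` polynomial matrix. -/
def vKronRow (n k : ℕ) (v : Fin k → ℝ) (Q : Matrix (Fin n) (Fin n) (Polynomial ℝ)) :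
    Matrix (Fin n) (Fin k × Fin n) (Polynomial ℝ) :=
  Matrix.of fun s q => C (v q.1) * Q s q.2

/-- A matrix pencil: a matrix polynomial each of whose entries has degree at most `1`. -/
def IsPencil {m m' : Type*} (L : Matrix m m' (Polynomial ℝ)) : Prop :=
  ∀ p q, (L p q).degree ≤ 1

/-- `ℒ(λ) ∈ 𝕄₁(P)` with ansatz vector `v`, i.e. `ℒ(λ)(Φ_k(λ) ⊗ I_n) = v ⊗ P(λ)`. -/
def Ansatz1 (n k : ℕ) (φ : ℕ → Polynomial ℝ) (Pm : ℕ → Matrix (Fin n) (Fin n) ℝ)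
    (L : Matrix (Fin k × Fin n) (Fin k × Fin n) (Polynomial ℝ)) (v : Fin k → ℝ) : Prop :=
  L * PhiMat n k φ = vKron n k v (matP n k φ Pm)

/-- `ℒ(λ) ∈ 𝕄₂(P)` with ansatz vector `w`, i.e. `(Φ_k(λ)^T ⊗ I_n) ℒ(λ) = w^T ⊗ P(λ)`. -/
def Ansatz2 (n k : ℕ) (φ : ℕ → Polynomial ℝ) (Pm : ℕ → Matrix (Fin n) (Fin n) ℝ)
    (L : Matrix (Fin k × Fin n) (Fin k × Fin n) (Polynomial ℝ)) (w : Fin k → ℝ) : Prop :=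
  (PhiMat n k φ)ᵀ * L = vKronRow n k w (matP n k φ Pm)

/-- The anchor pencil `F_Φ^P(λ) = [m_Φ^P(λ); M_Φ(λ)]`. -/
def FPhi (n k : ℕ) (a b c : ℕ → ℝ) (Pm : ℕ → Matrix (Fin n) (Fin n) ℝ) :
    Matrix (Fin k × Fin n) (Fin k × Fin n) (Polynomial ℝ) :=
  Matrix.of fun p q =>
    if p.1.val = 0 then
      -- the block row m_Φ^P(λ)
      if q.1.val = 0 then
        C ((a (k - 1))⁻¹) * (X - C (b (k - 1))) * C (Pm k p.2 q.2) + C (Pm (k - 1) p.2 q.2)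
      else if q.1.val = 1 then
        C (Pm (k - 2) p.2 q.2) - C (c (k - 1) / a (k - 1)) * C (Pm k p.2 q.2)
      else
        C (Pm (k - 1 - q.1.val) p.2 q.2)
    else
      -- the block rows M_Φ(λ) = M_Φ^⋆(λ) ⊗ I_n
      (if q.1.val + 1 = p.1.val then -C (a (k - 1 - p.1.val))
       else if q.1.val = p.1.val then X - C (b (k - 1 - p.1.val))
       else if q.1.val = p.1.val + 1 then -C (c (k - 1 - p.1.val))
       else 0) * (if p.2 = q.2 then 1 else 0)

/-- The `kn × kn` real matrix `[v ⊗ I_n, B]`: first `n` columns form `v ⊗ I_n`,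
the remaining `(k-1)n` columns form `B`. -/
def extCols (n k : ℕ) (v : Fin k → ℝ)
    (B : Matrix (Fin k × Fin n) (Fin (k - 1) × Fin n) ℝ) :
    Matrix (Fin k × Fin n) (Fin k × Fin n) ℝ :=
  Matrix.of fun p q =>
    if h : q.1.val = 0 then (if p.2 = q.2 then v p.1 else 0)
    else B p (⟨q.1.val - 1, by have := q.1.isLt; omega⟩, q.2)

/-- The `kn × kn` real matrix `[w^T ⊗ I_n; B]`: first `n` rows form `w^T ⊗ I_n`,
the remaining `(k-1)n` rows form `B`. -/
def extRows (n k : ℕ) (w : Fin k → ℝ)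
    (B : Matrix (Fin (k - 1) × Fin n) (Fin k × Fin n) ℝ) :
    Matrix (Fin k × Fin n) (Fin k × Fin n) ℝ :=
  Matrix.of fun p q =>
    if h : p.1.val = 0 then (if p.2 = q.2 then w q.1 else 0)
    else B (⟨p.1.val - 1, by have := p.1.isLt; omega⟩, p.2) q

/-- A real matrix viewed as a constant matrix polynomial. -/
def liftC {m m' : Type*} (A : Matrix m m' ℝ) : Matrix m m' (Polynomial ℝ) :=
  A.map C

/-- Block transpose of a matrix consisting of `n × n` blocks: block `(i,j)` of `A^𝓑`
is block `(j,i)` of `A`. -/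
def blockTr {n k1 k2 : ℕ} {R : Type*} (A : Matrix (Fin k1 × Fin n) (Fin k2 × Fin n) R) :
    Matrix (Fin k2 × Fin n) (Fin k1 × Fin n) R :=
  Matrix.of fun p q => A (q.1, p.2) (p.1, q.2)

/-- `rev_d Q(λ) = λ^d Q(1/λ)`, entrywise reversal of a matrix polynomial of degree at most `d`. -/
def revMat {m m' : Type*} (d : ℕ) (L : Matrix m m' (Polynomial ℝ)) :
    Matrix m m' (Polynomial ℝ) :=
  Matrix.of fun p q => (L p q).reflect d

/-- Evaluation of a real matrix polynomial at a complex number. -/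
def evalC {m m' : Type*} (α : ℂ) (L : Matrix m m' (Polynomial ℝ)) : Matrix m m' ℂ :=
  Matrix.of fun p q => aeval α (L p q)

/-- A matrix polynomial viewed as a matrix over the field `ℝ(λ)` of rational functions. -/
def liftRat {m m' : Type*} (L : Matrix m m' (Polynomial ℝ)) : Matrix m m' (RatFunc ℝ) :=
  L.map (algebraMap (Polynomial ℝ) (RatFunc ℝ))

/-- `v ⊗ I_n` as a `kn × n` complex matrix. -/
def vKronC (n k : ℕ) (v : Fin k → ℝ) : Matrix (Fin k × Fin n) (Fin n) ℂ :=
  Matrix.of fun p s => if p.2 = s then (v p.1 : ℂ) else 0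

/-- `v ⊗ I_n` as a `kn × n` matrix over `ℝ(λ)`. -/
def vKronRat (n k : ℕ) (v : Fin k → ℝ) : Matrix (Fin k × Fin n) (Fin n) (RatFunc ℝ) :=
  Matrix.of fun p s => if p.2 = s then RatFunc.C (v p.1) else 0

/-- The pencil `Xm λ + Ym` as a matrix polynomial. -/
def pencilPoly {m : Type*} (Xm Ym : Matrix m m ℝ) : Matrix m m (Polynomial ℝ) :=
  Matrix.of fun p q => C (Xm p q) * X + C (Ym p q)

/-- `diag(P(λ), I_{(k-1)n})` as a `kn × kn` matrix polynomial. -/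
def diagPI (n k : ℕ) (Pp : Matrix (Fin n) (Fin n) (Polynomial ℝ)) :
    Matrix (Fin k × Fin n) (Fin k × Fin n) (Polynomial ℝ) :=
  Matrix.of fun p q =>
    if p.1.val = 0 ∧ q.1.val = 0 then Pp p.2 q.2 else if p = q then 1 else 0

/-- `ℒ(λ)` is a linearization of `P(λ)`: there are `U(λ), V(λ)` with nonzero real constant
determinants such that `U(λ)ℒ(λ)V(λ) = diag(P(λ), I_{(k-1)n})`. -/
def IsLinearization (n k : ℕ)
    (L : Matrix (Fin k × Fin n) (Fin k × Fin n) (Polynomial ℝ))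
    (Pp : Matrix (Fin n) (Fin n) (Polynomial ℝ)) : Prop :=
  ∃ U V : Matrix (Fin k × Fin n) (Fin k × Fin n) (Polynomial ℝ),
    (∃ cu : ℝ, cu ≠ 0 ∧ U.det = C cu) ∧ (∃ cv : ℝ, cv ≠ 0 ∧ V.det = C cv) ∧
    U * L * V = diagPI n k Pp

/-- `ℒ(λ)` is a strong linearization of `P(λ)` (of degree `k`): it is a linearization and
`rev₁ ℒ(λ)` is a linearization of `rev_k P(λ)`. -/
def IsStrongLin (n k : ℕ)
    (L : Matrix (Fin k × Fin n) (Fin k × Fin n) (Polynomial ℝ))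
    (Pp : Matrix (Fin n) (Fin n) (Polynomial ℝ)) : Prop :=
  IsLinearization n k L Pp ∧ IsLinearization n k (revMat 1 L) (revMat k Pp)

section ExclusionAux


variable {R : Type*} [CommRing R] {S : Type*} [CommRing S] {n k : ℕ}

def exInc (n k : ℕ) (R : Type*) [CommRing R] : Matrix (Fin k × Fin n) (Fin n) R :=
  Matrix.of fun p t => if p.1.val = 0 ∧ p.2 = t then 1 else 0

def exVI (n k : ℕ) {R : Type*} [CommRing R] (w : Fin k → R) :
    Matrix (Fin k × Fin n) (Fin n) R :=
  Matrix.of fun p s => if p.2 = s then w p.1 else 0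

def exDiag (n k : ℕ) {R : Type*} [CommRing R] (Pp : Matrix (Fin n) (Fin n) R) :
    Matrix (Fin k × Fin n) (Fin k × Fin n) R :=
  Matrix.of fun p q => if p.1.val = 0 ∧ q.1.val = 0 then Pp p.2 q.2 else if p = q then 1 else 0

lemma exInc_transpose_mul (hk : 0 < k) : (exInc n k R)ᵀ * exInc n k R = 1 := by
  ext s t
  rw [Matrix.mul_apply, Fintype.sum_prod_type]
  rw [Finset.sum_eq_single (⟨0, hk⟩ : Fin k)]
  · simp [exInc, Matrix.one_apply, Finset.sum_ite_eq, eq_comm]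
  · intro b _ hb
    apply Finset.sum_eq_zero
    intro x _
    have : ¬ b.val = 0 := fun h => hb (Fin.ext h)
    simp [exInc, this]
  · simp

lemma exVI_transpose_mul (w w' : Fin k → R) :
    (exVI n k w)ᵀ * exVI n k w' = (∑ i, w i * w' i) • 1 := by
  ext s t
  rw [Matrix.mul_apply, Fintype.sum_prod_type]
  by_cases h : s = t
  · subst h
    simp [exVI, Matrix.one_apply, Finset.sum_ite_eq, Finset.mul_sum]
  · simp [exVI, Matrix.one_apply, h, Finset.sum_ite_eq]
    intro x
    exact (h x.symm).elim

lemma exInc_mul_apply (Pp : Matrix (Fin n) (Fin n) R) (p : Fin k × Fin n) (t' : Fin n) :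
    (exInc n k R * Pp) p t' = if p.1.val = 0 then Pp p.2 t' else 0 := by
  rw [Matrix.mul_apply]
  by_cases h : p.1.val = 0 <;> simp [exInc, h, ite_and, Finset.sum_ite_eq]

lemma exMul_incT_apply (A : Matrix (Fin k × Fin n) (Fin n) R) (p q : Fin k × Fin n) :
    (A * (exInc n k R)ᵀ) p q = if q.1.val = 0 then A p q.2 else 0 := by
  rw [Matrix.mul_apply]
  by_cases h : q.1.val = 0 <;>
    simp [exInc, h, ite_and, Finset.sum_ite_eq, eq_comm, mul_comm]

lemma exDiag_eq (Pp : Matrix (Fin n) (Fin n) R) :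
    exDiag n k Pp = exInc n k R * Pp * (exInc n k R)ᵀ + (1 - exInc n k R * (exInc n k R)ᵀ) := by
  ext p q
  rw [Matrix.add_apply, Matrix.sub_apply, exMul_incT_apply, exMul_incT_apply, exInc_mul_apply]
  by_cases hp : p.1.val = 0 <;> by_cases hq : q.1.val = 0 <;>
    simp [exDiag, exInc, hp, hq, Matrix.one_apply, Prod.ext_iff, Fin.ext_iff]

lemma exInc_map (f : R →+* S) : (exInc n k R).map f = exInc n k S := by
  ext p t; simp [exInc, Matrix.map_apply, apply_ite f]

lemma exVI_map (f : R →+* S) (w : Fin k → R) :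
    (exVI n k w).map f = exVI n k (fun i => f (w i)) := by
  ext p t; simp [exVI, Matrix.map_apply, apply_ite f]

lemma exDiag_map (f : R →+* S) (Pp : Matrix (Fin n) (Fin n) R) :
    (exDiag n k Pp).map f = exDiag n k (Pp.map f) := by
  ext p q; simp [exDiag, Matrix.map_apply, apply_ite f]

lemma exMap_smul {m m' : Type*} (f : R →+* S) (c : R) (A : Matrix m m' R) :
    (c • A).map f = f c • A.map f := by
  ext p q; simp [Matrix.map_apply, Matrix.smul_apply]

lemma exSmul_cancel [IsDomain R] {m m' : Type*} {c : R} (hc : c ≠ 0)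
    {A B : Matrix m m' R} (h : c • A = c • B) : A = B := by
  ext p q
  have := congrFun (congrFun h p) q
  simpa [Matrix.smul_apply] using mul_left_cancel₀ hc this

lemma exCancel_right [IsDomain R] {m : Type*} [Fintype m]
    {Pc : Matrix (Fin n) (Fin n) R} (hPc : Pc.det ≠ 0)
    {A B : Matrix m (Fin n) R} (h : A * Pc = B * Pc) : A = B := by
  have h2 := congrArg (fun M => M * Pc.adjugate) h
  simp only [Matrix.mul_assoc, Matrix.mul_adjugate] at h2
  rw [Matrix.mul_smul, Matrix.mul_smul, Matrix.mul_one, Matrix.mul_one] at h2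
  exact exSmul_cancel hPc h2

lemma exCancel_left [IsDomain R] {m : Type*} [Fintype m]
    {Pc : Matrix (Fin n) (Fin n) R} (hPc : Pc.det ≠ 0)
    {A B : Matrix (Fin n) m R} (h : Pc * A = Pc * B) : A = B := by
  have h2 := congrArg (fun M => Pc.adjugate * M) h
  simp only [← Matrix.mul_assoc, Matrix.adjugate_mul] at h2
  rw [Matrix.smul_mul, Matrix.smul_mul, Matrix.one_mul, Matrix.one_mul] at h2
  exact exSmul_cancel hPc h2

lemma exEvMul {m m' m'' : Type*} [Fintype m'] (α : ℂ) (A : Matrix m m' (Polynomial ℂ))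
    (B : Matrix m' m'' (Polynomial ℂ)) :
    (A * B).map (eval α) = A.map (eval α) * B.map (eval α) := by
  simpa [Polynomial.coe_evalRingHom] using
    Matrix.map_mul (L := A) (M := B) (f := Polynomial.evalRingHom α)

lemma exEvSmul {m m' : Type*} (α : ℂ) (c : Polynomial ℂ) (A : Matrix m m' (Polynomial ℂ)) :
    (c • A).map (eval α) = eval α c • A.map (eval α) := by
  ext p q; simp [Matrix.map_apply, Matrix.smul_apply]

lemma exEvOne {m : Type*} [Fintype m] [DecidableEq m] (α : ℂ) :
    (1 : Matrix m m (Polynomial ℂ)).map (eval α) = 1 := by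
  ext p q; simp [Matrix.map_apply, Matrix.one_apply, apply_ite (eval α)]

lemma exFinrankComp {M M' M'' : Type*} [AddCommGroup M] [AddCommGroup M'] [AddCommGroup M'']
    [Module ℂ M] [Module ℂ M'] [Module ℂ M''] (h : M →ₗ[ℂ] M') (g : M'' →ₗ[ℂ] M)
    (hinj : Function.Injective h) :
    Module.finrank ℂ (LinearMap.range (h ∘ₗ g)) = Module.finrank ℂ (LinearMap.range g) := by
  rw [LinearMap.range_comp]
  exact ((Submodule.equivMapOfInjective h hinj _).finrank_eq).symm

lemma exInc_mulVec (x : Fin n → ℂ) (p : Fin k × Fin n) :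
    ((exInc n k ℂ).mulVec x) p = if p.1.val = 0 then x p.2 else 0 := by
  by_cases h : p.1.val = 0 <;>
    simp [Matrix.mulVec, dotProduct, exInc, h, ite_and, Finset.sum_ite_eq]

lemma exVI_mulVec (w : Fin k → ℂ) (x : Fin n → ℂ) (p : Fin k × Fin n) :
    ((exVI n k w).mulVec x) p = w p.1 * x p.2 := by
  simp [Matrix.mulVec, dotProduct, exVI, ite_and, Finset.sum_ite_eq,
    Finset.mul_sum]

set_option maxHeartbeats 1600000 in
set_option synthInstance.maxHeartbeats 400000 in
/-- The core exclusion lemma. -/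
lemma exCore (n k : ℕ) (hn : 0 < n) (hk : 0 < k)
    (Pc : Matrix (Fin n) (Fin n) (Polynomial ℂ))
    (L : Matrix (Fin k × Fin n) (Fin k × Fin n) (Polynomial ℂ))
    (Θ : Fin k → Polynomial ℂ) (v : Fin k → ℂ)
    (h1 : L * exVI n k Θ = exVI n k (fun i => C (v i)) * Pc)
    (h2 : (exVI n k Θ)ᵀ * L = Pc * (exVI n k (fun i => C (v i)))ᵀ)
    (U V : Matrix (Fin k × Fin n) (Fin k × Fin n) (Polynomial ℂ))
    (cu cv : ℂ) (hcu : cu ≠ 0) (hcv : cv ≠ 0)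
    (hU : U.det = C cu) (hV : V.det = C cv)
    (hUV : U * L * V = exDiag n k Pc)
    (hreg : Pc.det ≠ 0)
    (α : ℂ) (hsing : (Pc.map (eval α)).det = 0)
    (i₀ : Fin k) (hθ : eval α (Θ i₀) ≠ 0) :
    eval α (∑ i, C (v i) * Θ i) ≠ 0 := by
  classical
  intro hq
  set Nm := Pc.adjugate with hNmdef
  set δ := Pc.det with hδdef
  set π : Polynomial ℂ := X - C α with hπdef
  have hπne : π ≠ 0 := X_sub_C_ne_zero α
  have hNP : Nm * Pc = δ • 1 := Matrix.adjugate_mul Pc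
  have hPN : Pc * Nm = δ • 1 := Matrix.mul_adjugate Pc
  have hNne : Nm ≠ 0 := by
    intro h0
    apply hreg
    have := congrFun (congrFun hNP ⟨0, hn⟩) ⟨0, hn⟩
    rw [h0] at this
    simpa [Matrix.smul_apply, Matrix.one_apply] using this.symm
  obtain ⟨i0, j0, hij⟩ : ∃ i j, Nm i j ≠ 0 := by
    by_contra hcon
    push_neg at hcon
    exact hNne (by funext i j; simpa using hcon i j)
  set bnd := (Nm i0 j0).natDegree with hbnddef
  set e := Nat.findGreatest (fun e => ∀ i j, π ^ e ∣ Nm i j) bnd with hedef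
  have hPe : ∀ i j, π ^ e ∣ Nm i j :=
    Nat.findGreatest_spec (P := fun e => ∀ i j, π ^ e ∣ Nm i j) (m := 0) (Nat.zero_le _)
      (by intro i j; simp)
  have hbound : ∀ m, (∀ i j, π ^ m ∣ Nm i j) → m ≤ bnd := by
    intro m hm
    have h1 := Polynomial.natDegree_le_of_dvd (hm i0 j0) hij
    have h2 : (π ^ m).natDegree = m := by
      simp [hπdef, Polynomial.natDegree_pow, Polynomial.natDegree_X_sub_C]
    omega
  have hnot : ¬ (∀ i j, π ^ (e + 1) ∣ Nm i j) := by
    intro hcon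
    exact Nat.findGreatest_is_greatest (lt_add_one e) (hbound _ hcon) hcon
  choose N' hN' using hPe
  set N'm : Matrix (Fin n) (Fin n) (Polynomial ℂ) := Matrix.of N' with hN'mdef
  have hNm : Nm = (π ^ e) • N'm := by
    funext i j; simpa [Matrix.smul_apply, hN'mdef] using hN' i j
  set B := N'm.map (eval α) with hBdef
  have hB : B ≠ 0 := by
    intro h0
    apply hnot
    intro i j
    have hev : eval α (N' i j) = 0 := by
      have := congrFun (congrFun h0 i) j
      simpa [hBdef, Matrix.map_apply, hN'mdef] using this
    have hdvd : π ∣ N' i j := (Polynomial.dvd_iff_isRoot).mpr hev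
    rw [hN' i j, pow_succ]
    exact mul_dvd_mul_left _ hdvd
  have hδe : π ^ e ∣ δ := by
    have := congrFun (congrFun hNP ⟨0, hn⟩) ⟨0, hn⟩
    rw [Matrix.mul_apply] at this
    simp only [Matrix.smul_apply, Matrix.one_apply_eq, smul_eq_mul, mul_one] at this
    rw [← this]
    exact Finset.dvd_sum fun t _ => Dvd.dvd.mul_right (hN' ⟨0, hn⟩ t ▸ Dvd.intro _ rfl) _
  have hδe1 : π ^ (e + 1) ∣ δ := by
    by_contra hcon
    obtain ⟨δ₂, hδ₂⟩ := hδe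
    have hπδ₂ : ¬ π ∣ δ₂ := by
      intro hd
      apply hcon
      rw [hδ₂, pow_succ]
      exact mul_dvd_mul_left _ hd
    have hev : eval α δ₂ ≠ 0 := fun h => hπδ₂ ((Polynomial.dvd_iff_isRoot).mpr h)
    have hN'P : N'm * Pc = δ₂ • 1 := by
      have hstep : (π ^ e) • (N'm * Pc)
          = (π ^ e) • (δ₂ • (1 : Matrix (Fin n) (Fin n) (Polynomial ℂ))) := by
        rw [← Matrix.smul_mul, ← hNm, hNP, hδ₂, smul_smul]
      exact exSmul_cancel (pow_ne_zero e hπne) hstep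
    have hmap := congrArg (fun M => (Matrix.map M (eval α)).det) hN'P
    simp only [exEvMul, exEvSmul, exEvOne, Matrix.det_mul, Matrix.det_smul, Matrix.det_one,
      hsing, mul_zero, mul_one] at hmap
    have hne := pow_ne_zero (Fintype.card (Fin n)) hev
    exact hne (by simpa using hmap.symm)
  obtain ⟨δ₃, hδ₃⟩ := hδe1
  -- the W-calculus
  set inc := exInc n k (Polynomial ℂ) with hincdef
  set J : Matrix (Fin k × Fin n) (Fin k × Fin n) (Polynomial ℂ) := 1 - inc * incᵀ with hJdef
  have hti : incᵀ * inc = 1 := exInc_transpose_mul hk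
  have hred : ∀ {m : Type} (A : Matrix (Fin n) m (Polynomial ℂ)), incᵀ * (inc * A) = A := by
    intro m A; rw [← Matrix.mul_assoc, hti, Matrix.one_mul]
  have hincTJ : incᵀ * J = 0 := by
    rw [hJdef, Matrix.mul_sub, Matrix.mul_one, hred, sub_self]
  have hJinc : J * inc = 0 := by
    rw [hJdef, Matrix.sub_mul, Matrix.one_mul, Matrix.mul_assoc, hti, Matrix.mul_one, sub_self]
  have hJJ : J * J = J := by
    nth_rewrite 2 [hJdef]
    rw [Matrix.mul_sub, Matrix.mul_one, ← Matrix.mul_assoc, hJinc, Matrix.zero_mul, sub_zero]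
  set D := exDiag n k Pc with hDdef
  have hD : D = inc * Pc * incᵀ + J := exDiag_eq Pc
  set W := inc * Nm * incᵀ + δ • J with hWdef
  have hDW : D * W = δ • 1 := by
    rw [hD, hWdef, Matrix.add_mul, Matrix.mul_add, Matrix.mul_add]
    have t1 : inc * Pc * incᵀ * (inc * Nm * incᵀ) = δ • (inc * incᵀ) := by
      calc inc * Pc * incᵀ * (inc * Nm * incᵀ)
          = inc * (Pc * (incᵀ * (inc * (Nm * incᵀ)))) := by simp only [Matrix.mul_assoc]
        _ = inc * (Pc * (Nm * incᵀ)) := by rw [hred]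
        _ = inc * ((Pc * Nm) * incᵀ) := by simp only [Matrix.mul_assoc]
        _ = δ • (inc * incᵀ) := by
            rw [hPN, Matrix.smul_mul, Matrix.one_mul, Matrix.mul_smul]
    have t2 : inc * Pc * incᵀ * (δ • J) = 0 := by
      rw [Matrix.mul_smul, Matrix.mul_assoc, Matrix.mul_assoc, hincTJ]
      simp
    have t3 : J * (inc * Nm * incᵀ) = 0 := by
      simp only [← Matrix.mul_assoc, hJinc, Matrix.zero_mul]
    have t4 : J * (δ • J) = δ • J := by rw [Matrix.mul_smul, hJJ]
    rw [t1, t2, t3, t4, add_zero, zero_add, ← smul_add, hJdef, add_sub_cancel]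
  have hWD : W * D = δ • 1 := by
    rw [hD, hWdef, Matrix.add_mul, Matrix.mul_add, Matrix.mul_add]
    have t1 : inc * Nm * incᵀ * (inc * Pc * incᵀ) = δ • (inc * incᵀ) := by
      calc inc * Nm * incᵀ * (inc * Pc * incᵀ)
          = inc * (Nm * (incᵀ * (inc * (Pc * incᵀ)))) := by simp only [Matrix.mul_assoc]
        _ = inc * (Nm * (Pc * incᵀ)) := by rw [hred]
        _ = inc * ((Nm * Pc) * incᵀ) := by simp only [Matrix.mul_assoc]
        _ = δ • (inc * incᵀ) := by
            rw [hNP, Matrix.smul_mul, Matrix.one_mul, Matrix.mul_smul]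
    have t2 : inc * Nm * incᵀ * J = 0 := by
      rw [Matrix.mul_assoc, Matrix.mul_assoc, hincTJ]
      simp
    have t3 : (δ • J) * (inc * Pc * incᵀ) = 0 := by
      rw [Matrix.smul_mul, ← Matrix.mul_assoc, ← Matrix.mul_assoc, hJinc]
      simp
    have t4 : (δ • J) * J = δ • J := by rw [Matrix.smul_mul, hJJ]
    rw [t1, t2, t3, t4, add_zero, zero_add, ← smul_add, hJdef, add_sub_cancel]
  -- pass to the field of rational functions to invert U and V
  set am : Polynomial ℂ →+* RatFunc ℂ := (algebraMap (Polynomial ℂ) (RatFunc ℂ)) with hamdef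
  have hamInj : Function.Injective am := IsFractionRing.injective _ _
  have hmatInj : ∀ {m m' : Type} (A A' : Matrix m m' (Polynomial ℂ)),
      A.map am = A'.map am → A = A' := by
    intro m m' A A' h
    funext p q
    exact hamInj (congrFun (congrFun h p) q)
  have hmapMul : ∀ {m m' m'' : Type} [Fintype m'] (A : Matrix m m' (Polynomial ℂ))
      (A' : Matrix m' m'' (Polynomial ℂ)), (A * A').map am = A.map am * A'.map am := by
    intro m m' m'' _ A A'
    exact Matrix.map_mul
  have hUdetK : IsUnit (U.map am).det := by
    have : (U.map am).det = am U.det := by rw [RingHom.map_det]; rfl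
    rw [this, hU]
    apply isUnit_iff_ne_zero.mpr
    simp only [ne_eq, hamdef, IsFractionRing.to_map_eq_zero_iff]
    exact fun h => hcu (by simpa using congrArg (eval 0) h)
  have hVdetK : IsUnit (V.map am).det := by
    have : (V.map am).det = am V.det := by rw [RingHom.map_det]; rfl
    rw [this, hV]
    apply isUnit_iff_ne_zero.mpr
    simp only [ne_eq, hamdef, IsFractionRing.to_map_eq_zero_iff]
    exact fun h => hcv (by simpa using congrArg (eval 0) h)
  have hUVK : U.map am * L.map am * V.map am = D.map am := by
    rw [← hmapMul, ← hmapMul, hUV, hDdef]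
  have hWDK : W.map am * D.map am = am δ • 1 := by
    rw [← hmapMul, hWD, exMap_smul]
    congr 1
    exact Matrix.map_one _ (map_zero am) (map_one am)
  have hDWK : D.map am * W.map am = am δ • 1 := by
    rw [← hmapMul, hDW, exMap_smul]
    congr 1
    exact Matrix.map_one _ (map_zero am) (map_one am)
  have hML : (V * W * U) * L = δ • 1 := by
    apply hmatInj
    rw [hmapMul, hmapMul, hmapMul, exMap_smul]
    have hul : U.map am * L.map am = D.map am * (V.map am)⁻¹ := by
      rw [← hUVK, Matrix.mul_assoc, Matrix.mul_nonsing_inv _ hVdetK, Matrix.mul_one]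
    calc V.map am * W.map am * U.map am * L.map am
        = V.map am * W.map am * (U.map am * L.map am) := by rw [Matrix.mul_assoc]
      _ = V.map am * (W.map am * D.map am) * (V.map am)⁻¹ := by
          rw [hul]; simp only [Matrix.mul_assoc]
      _ = am δ • (V.map am * (V.map am)⁻¹) := by
          rw [hWDK, Matrix.mul_smul, Matrix.mul_one, Matrix.smul_mul]
      _ = am δ • (1 : Matrix (Fin k × Fin n) (Fin k × Fin n) (RatFunc ℂ)) := by
          rw [Matrix.mul_nonsing_inv _ hVdetK]
      _ = (δ • (1 : Matrix (Fin k × Fin n) (Fin k × Fin n) (Polynomial ℂ))).map am := by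
          rw [exMap_smul]
          congr 1
          exact (Matrix.map_one _ (map_zero am) (map_one am)).symm
    rw [exMap_smul]
  have hLM : L * (V * W * U) = δ • 1 := by
    apply hmatInj
    rw [hmapMul, hmapMul, hmapMul, exMap_smul]
    have hlv : L.map am * V.map am = (U.map am)⁻¹ * D.map am := by
      rw [← hUVK, ← Matrix.mul_assoc, ← Matrix.mul_assoc,
        Matrix.nonsing_inv_mul _ hUdetK, Matrix.one_mul]
    calc L.map am * (V.map am * W.map am * U.map am)
        = (L.map am * V.map am) * W.map am * U.map am := by simp only [Matrix.mul_assoc]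
      _ = (U.map am)⁻¹ * (D.map am * W.map am) * U.map am := by
          rw [hlv]; simp only [Matrix.mul_assoc]
      _ = am δ • ((U.map am)⁻¹ * U.map am) := by
          rw [hDWK, Matrix.mul_smul, Matrix.mul_one, Matrix.smul_mul]
      _ = am δ • (1 : Matrix (Fin k × Fin n) (Fin k × Fin n) (RatFunc ℂ)) := by
          rw [Matrix.nonsing_inv_mul _ hUdetK]
    rw [Matrix.map_one _ (map_zero am) (map_one am)]
  -- the G-identities
  set T := exVI n k Θ with hTdef
  set vIm := exVI n k (fun i => C (v i)) with hvIdef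
  set Cm := U * vIm with hCmdef
  set C₁ := incᵀ * Cm with hC1def
  set Rm := vImᵀ * V with hRmdef
  set R₁ := Rm * inc with hR1def
  set Y' := inc * N'm * C₁ + (π * δ₃) • (Cm - inc * C₁) with hY'def
  set Z' := R₁ * N'm * incᵀ + (π * δ₃) • (Rm - R₁ * incᵀ) with hZ'def
  have hsmulpow : ∀ {m m' : Type} (A : Matrix m m' (Polynomial ℂ)),
      δ • A = (π ^ e) • ((π * δ₃) • A) := by
    intro m m' A
    rw [smul_smul, hδ₃, pow_succ]
    ring_nf
  have hWCm : W * Cm = (π ^ e) • Y' := by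
    rw [hWdef, Matrix.add_mul, Matrix.smul_mul]
    have hh1 : inc * Nm * incᵀ * Cm = (π ^ e) • (inc * N'm * C₁) := by
      rw [hNm, hC1def]
      simp only [Matrix.mul_smul, Matrix.smul_mul, Matrix.mul_assoc]
    have hh2 : J * Cm = Cm - inc * C₁ := by
      rw [hJdef, Matrix.sub_mul, Matrix.one_mul, Matrix.mul_assoc, hC1def]
    rw [hh1, hh2, hY'def, smul_add, hsmulpow]
  have hRmW : Rm * W = (π ^ e) • Z' := by
    rw [hWdef, Matrix.mul_add, Matrix.mul_smul]
    have hh1 : Rm * (inc * Nm * incᵀ) = (π ^ e) • (R₁ * N'm * incᵀ) := by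
      rw [hNm, hR1def]
      simp only [Matrix.mul_smul, Matrix.smul_mul, Matrix.mul_assoc]
    have hh2 : Rm * J = Rm - R₁ * incᵀ := by
      rw [hJdef, Matrix.mul_sub, Matrix.mul_one, hR1def, Matrix.mul_assoc]
      simp only [hRmdef, Matrix.mul_assoc]
    rw [hh1, hh2, hZ'def, smul_add, hsmulpow]
  have hG1pre : V * (W * Cm) = T * Nm := by
    apply exCancel_right hreg
    have e1 : (V * W * U) * (L * T) = (V * (W * Cm)) * Pc := by
      rw [h1]
      rw [hCmdef]
      simp only [Matrix.mul_assoc]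
    have e2 : (V * W * U) * (L * T) = δ • T := by
      rw [← Matrix.mul_assoc, hML, Matrix.smul_mul, Matrix.one_mul]
    have e3 : δ • T = (T * Nm) * Pc := by
      rw [Matrix.mul_assoc, hNP, Matrix.mul_smul, Matrix.mul_one]
    rw [← e1, e2, e3]
  have hG1 : V * Y' = T * N'm := by
    apply exSmul_cancel (pow_ne_zero e hπne)
    rw [← Matrix.mul_smul, ← hWCm, hG1pre, hNm, Matrix.mul_smul]
  have hG2pre : Rm * W * U = Nm * Tᵀ := by
    apply exCancel_left hreg
    have e1 : (Tᵀ * L) * (V * W * U) = Pc * (Rm * W * U) := by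
      rw [h2, hRmdef]
      simp only [Matrix.mul_assoc]
    have e2 : (Tᵀ * L) * (V * W * U) = δ • Tᵀ := by
      rw [Matrix.mul_assoc, hLM, Matrix.mul_smul, Matrix.mul_one]
    have e3 : δ • Tᵀ = Pc * (Nm * Tᵀ) := by
      rw [← Matrix.mul_assoc, hPN, Matrix.smul_mul, Matrix.one_mul]
    rw [← e1, e2, e3]
  have hG2 : Z' * U = N'm * Tᵀ := by
    apply exSmul_cancel (pow_ne_zero e hπne)
    rw [← Matrix.smul_mul, ← hRmW, hG2pre, hNm, Matrix.smul_mul]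
  have hvIT : vImᵀ * T = (∑ i, C (v i) * Θ i) • 1 := by
    rw [hTdef, hvIdef]
    exact exVI_transpose_mul _ _
  have hG3 : Rm * Y' = (∑ i, C (v i) * Θ i) • N'm := by
    have := congrArg (fun M => vImᵀ * M) hG1
    simp only [← Matrix.mul_assoc] at this
    rw [← hRmdef] at this
    rw [this, hvIT, Matrix.smul_mul, Matrix.one_mul]
  -- evaluate at α
  have hπ0 : eval α π = 0 := by simp [hπdef]
  have hYα : Y'.map (eval α) = (inc.map (eval α)) * (B * (C₁.map (eval α))) := by
    rw [hY'def]
    have : ((π * δ₃) • (Cm - inc * C₁)).map (eval α) = 0 := by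
      rw [exEvSmul]
      simp [hπ0]
    calc (inc * N'm * C₁ + (π * δ₃) • (Cm - inc * C₁)).map (eval α)
        = (inc * N'm * C₁).map (eval α) + ((π * δ₃) • (Cm - inc * C₁)).map (eval α) := by
          ext p q; simp [Matrix.map_apply, Matrix.add_apply]
      _ = (inc.map (eval α)) * (B * (C₁.map (eval α))) := by
          rw [this, add_zero, exEvMul, exEvMul, hBdef, Matrix.mul_assoc]
  have hZα : Z'.map (eval α) = ((Rm.map (eval α) * inc.map (eval α)) * B) * (incᵀ.map (eval α)) := by
    rw [hZ'def]
    have : ((π * δ₃) • (Rm - R₁ * incᵀ)).map (eval α) = 0 := by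
      rw [exEvSmul]
      simp [hπ0]
    calc (R₁ * N'm * incᵀ + (π * δ₃) • (Rm - R₁ * incᵀ)).map (eval α)
        = (R₁ * N'm * incᵀ).map (eval α) + ((π * δ₃) • (Rm - R₁ * incᵀ)).map (eval α) := by
          ext p q; simp [Matrix.map_apply, Matrix.add_apply]
      _ = ((Rm.map (eval α) * inc.map (eval α)) * B) * (incᵀ.map (eval α)) := by
          rw [this, add_zero, exEvMul, exEvMul, hBdef, hR1def, exEvMul]
  have hClub : (V.map (eval α)) * ((inc.map (eval α)) * (B * (C₁.map (eval α))))
      = (T.map (eval α)) * B := by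
    have := congrArg (fun M => M.map (eval α)) hG1
    rw [exEvMul, exEvMul, hYα, ← hBdef] at this
    exact this
  have hHeart : (Rm.map (eval α) * inc.map (eval α)) * (B * (C₁.map (eval α))) = 0 := by
    have := congrArg (fun M => M.map (eval α)) hG3
    rw [exEvMul, hYα, exEvSmul, hq, zero_smul] at this
    rw [← Matrix.mul_assoc] at this
    exact this
  have hSpade : B * ((T.map (eval α))ᵀ)
      = ((Rm.map (eval α) * inc.map (eval α)) * B) * ((incᵀ.map (eval α)) * (U.map (eval α))) := by
    have := congrArg (fun M => M.map (eval α)) hG2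
    rw [exEvMul, exEvMul, hZα, ← hBdef] at this
    have htr : (Tᵀ).map (eval α) = (T.map (eval α))ᵀ := by
      ext p q; simp [Matrix.map_apply]
    rw [htr] at this
    rw [← this]
    simp only [Matrix.mul_assoc]
  -- final linear algebra over ℂ
  set Vα := V.map (eval α) with hVαdef
  set Uα := U.map (eval α) with hUαdef
  set incα := inc.map (eval α) with hincαdef
  set Tα := T.map (eval α) with hTαdef
  set C₁α := C₁.map (eval α) with hC1αdef
  set Rα := Rm.map (eval α) * incα with hRαdef
  have hVdetα : IsUnit Vα.det := by
    have hh := RingHom.map_det (Polynomial.evalRingHom α) V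
    simp only [RingHom.mapMatrix_apply, Polynomial.coe_evalRingHom] at hh
    rw [hVαdef, ← hh, hV]
    simpa using isUnit_iff_ne_zero.mpr hcv
  have hVinj : Function.Injective (Vα.mulVec) := by
    intro x y h
    have h2 := congrArg (fun z => (Vα⁻¹).mulVec z) h
    simpa [Matrix.mulVec_mulVec, Matrix.nonsing_inv_mul _ hVdetα] using h2
  have hincα : incα = exInc n k ℂ := by
    rw [hincαdef, hincdef]
    ext p t
    simp [exInc, Matrix.map_apply, apply_ite (eval α)]
  have hincInj : Function.Injective (incα.mulVec) := by
    rw [hincα]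
    intro x y h
    funext j
    have := congrFun h (⟨0, hk⟩, j)
    simpa [exInc_mulVec] using this
  have hTα : Tα = exVI n k (fun i => eval α (Θ i)) := by
    rw [hTαdef, hTdef]
    ext p t
    simp [exVI, Matrix.map_apply, apply_ite (eval α)]
  have hTinj : Function.Injective (Tα.mulVec) := by
    rw [hTα]
    intro x y h
    funext j
    have := congrFun h (i₀, j)
    rw [exVI_mulVec, exVI_mulVec] at this
    exact mul_left_cancel₀ hθ this
  have hle : LinearMap.range (B * C₁α).mulVecLin ≤ LinearMap.range B.mulVecLin := by
    rw [Matrix.mulVecLin_mul]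
    exact LinearMap.range_comp_le_range _ _
  have hcomp : (Vα * incα).mulVecLin ∘ₗ (B * C₁α).mulVecLin = Tα.mulVecLin ∘ₗ B.mulVecLin := by
    rw [← Matrix.mulVecLin_mul, ← Matrix.mulVecLin_mul]
    congr 1
    calc Vα * incα * (B * C₁α) = Vα * (incα * (B * C₁α)) := by rw [Matrix.mul_assoc]
      _ = Tα * B := hClub
  have hVincInj : Function.Injective ((Vα * incα).mulVecLin) := by
    intro x y h
    simp only [Matrix.mulVecLin_apply] at h
    rw [← Matrix.mulVec_mulVec, ← Matrix.mulVec_mulVec] at h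
    exact hincInj (hVinj h)
  have hTinj' : Function.Injective (Tα.mulVecLin) := by
    intro x y h
    simp only [Matrix.mulVecLin_apply] at h
    exact hTinj h
  have hfr : Module.finrank ℂ (LinearMap.range (B * C₁α).mulVecLin)
      = Module.finrank ℂ (LinearMap.range B.mulVecLin) := by
    rw [← exFinrankComp _ ((B * C₁α).mulVecLin) hVincInj, hcomp,
      exFinrankComp _ (B.mulVecLin) hTinj']
  have hrangeEq : LinearMap.range (B * C₁α).mulVecLin = LinearMap.range B.mulVecLin :=
    Submodule.eq_of_le_of_finrank_le hle (le_of_eq hfr.symm)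
  have hRB : Rα * B = 0 := by
    have hvv : ∀ x, (Rα * B).mulVec x = 0 := by
      intro x
      have hmem : B.mulVec x ∈ LinearMap.range (B * C₁α).mulVecLin := by
        rw [hrangeEq]
        exact ⟨x, rfl⟩
      obtain ⟨y, hy⟩ := hmem
      simp only [Matrix.mulVecLin_apply] at hy
      rw [← Matrix.mulVec_mulVec, ← hy, Matrix.mulVec_mulVec]
      have : Rα * (B * C₁α) = 0 := hHeart
      rw [this, Matrix.zero_mulVec]
    funext s t
    have := congrFun (hvv (Pi.single t 1)) s
    simpa [Matrix.mulVec, dotProduct, Pi.single_apply, mul_ite,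
      Finset.sum_ite_eq'] using this
  have hBT0 : B * ((T.map (eval α))ᵀ) = 0 := by
    rw [hSpade, hRB, Matrix.zero_mul]
  apply hB
  funext s t
  have hentry := congrFun (congrFun hBT0 s) (i₀, t)
  rw [← hTαdef, hTα, Matrix.mul_apply] at hentry
  have hsum : ∑ j, B s j * (exVI n k (fun i => eval α (Θ i)))ᵀ j (i₀, t)
      = B s t * eval α (Θ i₀) := by
    rw [Finset.sum_eq_single t]
    · simp [exVI]
    · intro b _ hb
      simp [exVI, Matrix.transpose_apply, Ne.symm hb]
    · simp
  rw [hsum] at hentry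
  have := mul_eq_zero.mp hentry
  simp only [Matrix.zero_apply]
  tauto

lemma exVI_mul_apply (w : Fin k → R) (Q : Matrix (Fin n) (Fin n) R)
    (p : Fin k × Fin n) (s : Fin n) :
    (exVI n k w * Q) p s = w p.1 * Q p.2 s := by
  rw [Matrix.mul_apply]
  simp [exVI, ite_mul, Finset.sum_ite_eq]

lemma exMul_VIT_apply (w : Fin k → R) (Q : Matrix (Fin n) (Fin n) R)
    (s : Fin n) (q : Fin k × Fin n) :
    (Q * (exVI n k w)ᵀ) s q = Q s q.2 * w q.1 := by
  rw [Matrix.mul_apply]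
  simp [exVI, mul_ite, Finset.sum_ite_eq', eq_comm]

lemma exReflectSum {ι : Type*} (s : Finset ι) (f : ι → Polynomial R) (N : ℕ) :
    (∑ x ∈ s, f x).reflect N = ∑ x ∈ s, (f x).reflect N := by
  induction s using Finset.cons_induction with
  | empty => simp
  | cons a s ha ih => simp [Finset.sum_cons, Polynomial.reflect_add, ih]

lemma exReflectMap (f : R →+* S) (p : Polynomial R) (N : ℕ) :
    (p.reflect N).map f = (p.map f).reflect N := by
  ext i
  simp [Polynomial.coeff_map, Polynomial.coeff_reflect]

lemma exNatDegree_reflect_le {p : Polynomial R} {N : ℕ} (hp : p.natDegree ≤ N) :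
    (p.reflect N).natDegree ≤ N := by
  rw [Polynomial.natDegree_le_iff_coeff_eq_zero]
  intro m hm
  rw [Polynomial.coeff_reflect]
  have : (Polynomial.revAt N) m = m := Polynomial.revAt_eq_self_of_lt hm
  rw [this]
  exact Polynomial.coeff_eq_zero_of_natDegree_lt (lt_of_le_of_lt hp hm)

lemma exEvalReflect (f : Polynomial ℂ) (N : ℕ) (hf : f.natDegree ≤ N) (z : ℂ) (hz : z ≠ 0) :
    eval z (f.reflect N) = z ^ N * eval z⁻¹ f := by
  have hd1 : (f.reflect N).natDegree < N + 1 := Nat.lt_succ_of_le (exNatDegree_reflect_le hf)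
  have hd2 : f.natDegree < N + 1 := Nat.lt_succ_of_le hf
  rw [Polynomial.eval_eq_sum_range' hd1, Polynomial.eval_eq_sum_range' hd2]
  rw [Finset.mul_sum]
  rw [← Finset.sum_range_reflect]
  apply Finset.sum_congr rfl
  intro i hi
  rw [Finset.mem_range] at hi
  have hle : N + 1 - 1 - i ≤ N := by omega
  rw [Polynomial.coeff_reflect, Polynomial.revAt_le hle]
  have h1 : N - (N + 1 - 1 - i) = i := by omega
  rw [h1]
  have h2 : z ^ N = z ^ (N + 1 - 1 - i) * z ^ i := by
    rw [← pow_add]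
    congr 1
    omega
  rw [h2]
  field_simp [hz]
  ring_nf
  rw [mul_assoc, ← mul_pow, mul_inv_cancel₀ hz, one_pow, mul_one]

lemma exPhiAux (a b c : ℕ → ℝ) (ha : ∀ j, a j ≠ 0) (φ : ℕ → Polynomial ℝ) (hφ0 : φ 0 = 1)
    (hφ1 : C (a 0) * φ 1 = (X - C (b 0)) * φ 0)
    (hφrec : ∀ j, C (a (j + 1)) * φ (j + 2) =
      (X - C (b (j + 1))) * φ (j + 1) - C (c (j + 1)) * φ j) :
    ∀ j, (φ j).natDegree ≤ j ∧ (φ j).coeff j = (∏ i ∈ Finset.range j, a i)⁻¹ := by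
  have hsolve : ∀ (r : ℝ) (p q : Polynomial ℝ), r ≠ 0 → C r * p = q → p = C r⁻¹ * q := by
    intro r p q hr h
    rw [← h, ← mul_assoc, ← C_mul, inv_mul_cancel₀ hr, C_1, one_mul]
  intro j
  induction j using Nat.strong_induction_on with
  | _ j ih =>
    match j with
    | 0 => simp [hφ0]
    | 1 =>
      have h1 : φ 1 = C (a 0)⁻¹ * (X - C (b 0)) := by
        apply hsolve _ _ _ (ha 0)
        rw [hφ1, hφ0, mul_one]
      constructor
      · rw [h1]
        exact le_trans (Polynomial.natDegree_C_mul_le _ _)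
          (le_of_eq (Polynomial.natDegree_X_sub_C _))
      · rw [h1, Polynomial.coeff_C_mul]
        simp
    | (m + 2) =>
      obtain ⟨hd1, hc1⟩ := ih (m + 1) (by omega)
      obtain ⟨hd0, _⟩ := ih m (by omega)
      have h2 : φ (m + 2) = C (a (m + 1))⁻¹ *
          ((X - C (b (m + 1))) * φ (m + 1) - C (c (m + 1)) * φ m) :=
        hsolve _ _ _ (ha (m + 1)) (hφrec m)
      have hdX : ((X - C (b (m + 1))) * φ (m + 1)).natDegree ≤ m + 2 := by
        refine le_trans Polynomial.natDegree_mul_le ?_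
        have := Polynomial.natDegree_X_sub_C (b (m + 1))
        omega
      have hdC : (C (c (m + 1)) * φ m).natDegree ≤ m + 2 := by
        refine le_trans (Polynomial.natDegree_C_mul_le _ _) (by omega)
      constructor
      · rw [h2]
        refine le_trans (Polynomial.natDegree_C_mul_le _ _) ?_
        exact le_trans (Polynomial.natDegree_sub_le _ _) (by simp [hdX, hdC])
      · rw [h2, Polynomial.coeff_C_mul, Polynomial.coeff_sub]
        have e1 : ((X - C (b (m + 1))) * φ (m + 1)).coeff (m + 2)
            = (φ (m + 1)).coeff (m + 1) := by
          rw [sub_mul, Polynomial.coeff_sub, Polynomial.coeff_X_mul,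
            Polynomial.coeff_C_mul]
          have : (φ (m + 1)).coeff (m + 2) = 0 :=
            Polynomial.coeff_eq_zero_of_natDegree_lt (by omega)
          rw [this, mul_zero, sub_zero]
        have e2 : (C (c (m + 1)) * φ m).coeff (m + 2) = 0 := by
          rw [Polynomial.coeff_C_mul]
          have : (φ m).coeff (m + 2) = 0 :=
            Polynomial.coeff_eq_zero_of_natDegree_lt (by omega)
          rw [this, mul_zero]
        rw [e1, e2, sub_zero, hc1]
        have hps : ∏ i ∈ Finset.range (m + 2), a i
            = (∏ i ∈ Finset.range (m + 1), a i) * a (m + 1) := Finset.prod_range_succ a (m + 1)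
        rw [hps, mul_inv]
        ring

end ExclusionAux

set_option maxHeartbeats 1600000 in
set_option synthInstance.maxHeartbeats 400000 in
theorem statement_19
    (n k : ℕ) (hn : 0 < n) (hk : 2 ≤ k)
    (a b c : ℕ → ℝ) (ha : ∀ j, a j ≠ 0)
    (φ : ℕ → Polynomial ℝ) (hφ0 : φ 0 = 1)
    (hφ1 : C (a 0) * φ 1 = (X - C (b 0)) * φ 0)
    (hφrec : ∀ j, C (a (j + 1)) * φ (j + 2) =
      (X - C (b (j + 1))) * φ (j + 1) - C (c (j + 1)) * φ j)
    (Pm : ℕ → Matrix (Fin n) (Fin n) ℝ) (hPk : Pm k ≠ 0)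
    (hreg : (matP n k φ Pm).det ≠ 0)
    (L : Matrix (Fin k × Fin n) (Fin k × Fin n) (Polynomial ℝ)) (hL : IsPencil L) (v : Fin k → ℝ)
    (hv1 : Ansatz1 n k φ Pm L v) (hv2 : Ansatz2 n k φ Pm L v)
    (hstrong : IsStrongLin n k L (matP n k φ Pm)) :
    (∀ α : ℂ, (evalC α (matP n k φ Pm)).det = 0 →
        aeval α (∑ i : Fin k, C (v i) * φ (k - 1 - i.val)) ≠ 0) ∧
    ((evalC 0 (revMat k (matP n k φ Pm))).det = 0 → v ⟨0, by omega⟩ ≠ 0) := by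
  classical
  have hk0 : 0 < k := by omega
  set ρ : Polynomial ℝ →+* Polynomial ℂ := Polynomial.mapRingHom (algebraMap ℝ ℂ) with hρdef
  have hρinj : Function.Injective ρ :=
    Polynomial.map_injective _ (algebraMap ℝ ℂ).injective
  set Pcℝ := matP n k φ Pm with hPcℝdef
  set Pcℂ := Pcℝ.map ρ with hPcℂdef
  set Lℂ := L.map ρ with hLℂdef
  set Θ1 : Fin k → Polynomial ℂ := fun i => ρ (φ (k - 1 - i.val)) with hΘ1def
  set vℂ : Fin k → ℂ := fun i => (algebraMap ℝ ℂ) (v i) with hvℂdef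
  have hPhiMat : PhiMat n k φ = exVI n k (fun i : Fin k => φ (k - 1 - i.val)) := rfl
  have hvKron : vKron n k v Pcℝ = exVI n k (fun i => C (v i)) * Pcℝ := by
    funext p s
    rw [exVI_mul_apply]
    rfl
  have hvKronRow : vKronRow n k v Pcℝ = Pcℝ * (exVI n k (fun i => C (v i)))ᵀ := by
    funext s q
    rw [exMul_VIT_apply]
    show C (v q.1) * Pcℝ s q.2 = _
    ring
  have hmapT : ∀ {m m' : Type} (A : Matrix m m' (Polynomial ℝ)),
      (Aᵀ).map ρ = (A.map ρ)ᵀ := by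
    intro m m' A
    ext p q
    simp [Matrix.map_apply]
  have hVIρ : (exVI n k (fun i => C (v i))).map ρ = exVI n k (fun i => C (vℂ i)) := by
    rw [exVI_map]
    congr 1
    funext i
    simp [hρdef, Polynomial.map_C, hvℂdef]
  have hΘ1ρ : (exVI n k (fun i : Fin k => φ (k - 1 - i.val))).map ρ = exVI n k Θ1 := by
    rw [exVI_map]
  have h1ℂ : Lℂ * exVI n k Θ1 = exVI n k (fun i => C (vℂ i)) * Pcℂ := by
    have hv1' : L * PhiMat n k φ = vKron n k v Pcℝ := hv1
    have := congrArg (fun M => M.map ρ) hv1'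
    simp only [Matrix.map_mul (f := ρ)] at this
    rw [hPhiMat, hΘ1ρ, hvKron] at this
    rw [← hLℂdef] at this
    rw [this]
    rw [Matrix.map_mul (f := ρ), hVIρ, hPcℂdef]
  have h2ℂ : (exVI n k Θ1)ᵀ * Lℂ = Pcℂ * (exVI n k (fun i => C (vℂ i)))ᵀ := by
    have hv2' : (PhiMat n k φ)ᵀ * L = vKronRow n k v Pcℝ := hv2
    have := congrArg (fun M => M.map ρ) hv2'
    simp only [Matrix.map_mul (f := ρ)] at this
    rw [hvKronRow, hPhiMat, hmapT, hΘ1ρ] at this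
    rw [← hLℂdef] at this
    rw [this]
    rw [Matrix.map_mul (f := ρ), hmapT, hVIρ, hPcℂdef]
  have hregℂ : Pcℂ.det ≠ 0 := by
    intro h0
    apply hreg
    apply hρinj
    have hdet : ρ Pcℝ.det = Pcℂ.det := by
      rw [RingHom.map_det]
      rfl
    rw [hdet, h0, map_zero]
  have hevalC : ∀ (α : ℂ) (M : Matrix (Fin n) (Fin n) (Polynomial ℝ)),
      (M.map ρ).map (eval α) = evalC α M := by
    intro α M
    ext r s
    simp [evalC, Matrix.map_apply, hρdef, Polynomial.eval_map, Polynomial.aeval_def]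
  have hdetmap : ∀ (A : Matrix (Fin k × Fin n) (Fin k × Fin n) (Polynomial ℝ)) (r : ℝ),
      A.det = C r → (A.map ρ).det = C ((algebraMap ℝ ℂ) r) := by
    intro A r hA
    have : ρ A.det = (A.map ρ).det := by
      rw [RingHom.map_det]
      rfl
    rw [← this, hA, hρdef]
    simp [Polynomial.map_C]
  have hcast : ∀ r : ℝ, r ≠ 0 → (algebraMap ℝ ℂ) r ≠ 0 := by
    intro r hr h0
    exact hr ((algebraMap ℝ ℂ).injective (by simpa using h0))
  constructor
  · -- finite eigenvalues
    intro α hα hq0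
    obtain ⟨U1, V1, ⟨cu1, hcu1, hU1⟩, ⟨cv1, hcv1, hV1⟩, hUV1⟩ := hstrong.1
    have hUV1ℂ : (U1.map ρ) * Lℂ * (V1.map ρ) = exDiag n k Pcℂ := by
      have := congrArg (fun M => M.map ρ) hUV1
      simp only [Matrix.map_mul (f := ρ)] at this
      rw [← hLℂdef] at this
      rw [this]
      show (diagPI n k Pcℝ).map ρ = _
      have hdg : diagPI n k Pcℝ = exDiag n k Pcℝ := rfl
      rw [hdg, exDiag_map]
    have hsing' : (Pcℂ.map (eval α)).det = 0 := by
      rw [hPcℂdef, hevalC]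
      exact hα
    have hθ1 : eval α (Θ1 ⟨k - 1, by omega⟩) ≠ 0 := by
      have hzero : k - 1 - (k - 1) = 0 := Nat.sub_self _
      simp only [hΘ1def, hzero, hφ0, hρdef]
      simp
    refine exCore n k hn hk0 Pcℂ Lℂ Θ1 vℂ h1ℂ h2ℂ (U1.map ρ) (V1.map ρ)
      ((algebraMap ℝ ℂ) cu1) ((algebraMap ℝ ℂ) cv1) (hcast _ hcu1) (hcast _ hcv1)
      (hdetmap _ _ hU1) (hdetmap _ _ hV1) hUV1ℂ hregℂ α hsing' ⟨k - 1, by omega⟩ hθ1 ?_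
    have hsum : (∑ i : Fin k, C (v i) * φ (k - 1 - i.val)).map (algebraMap ℝ ℂ)
        = ∑ i : Fin k, C (vℂ i) * Θ1 i := by
      rw [Polynomial.map_sum]
      apply Finset.sum_congr rfl
      intro i _
      rw [Polynomial.map_mul, Polynomial.map_C]
      rfl
    rw [← hsum, Polynomial.eval_map, ← Polynomial.aeval_def]
    exact hq0
  · -- infinite eigenvalue
    intro hα0 hv0
    set Θ2 : Fin k → Polynomial ℂ := fun i => (Θ1 i).reflect (k - 1) with hΘ2def
    set L2 : Matrix (Fin k × Fin n) (Fin k × Fin n) (Polynomial ℂ) :=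
      Matrix.of fun p q => (Lℂ p q).reflect 1 with hL2def
    set Pc2 : Matrix (Fin n) (Fin n) (Polynomial ℂ) :=
      Matrix.of fun r s => (Pcℂ r s).reflect k with hPc2def
    have hφdeg := exPhiAux a b c ha φ hφ0 hφ1 hφrec
    have hΘ1deg : ∀ i : Fin k, (Θ1 i).natDegree ≤ k - 1 := by
      intro i
      refine le_trans Polynomial.natDegree_map_le ?_
      exact le_trans (hφdeg _).1 (by omega)
    have hLdeg : ∀ p q, (Lℂ p q).natDegree ≤ 1 := by
      intro p q
      refine le_trans Polynomial.natDegree_map_le ?_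
      exact Polynomial.natDegree_le_iff_degree_le.mpr (hL p q)
    have hPdegℝ : ∀ r s, (Pcℝ r s).natDegree ≤ k := by
      intro r s
      show (∑ i ∈ Finset.range (k + 1), C (Pm i r s) * φ i).natDegree ≤ k
      refine Polynomial.natDegree_sum_le_of_forall_le _ _ ?_
      intro i hi
      rw [Finset.mem_range] at hi
      exact le_trans (Polynomial.natDegree_C_mul_le _ _) (le_trans (hφdeg i).1 (by omega))
    have hPdeg : ∀ r s, (Pcℂ r s).natDegree ≤ k := fun r s =>
      le_trans Polynomial.natDegree_map_le (hPdegℝ r s)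
    have hk1 : 1 + (k - 1) = k := by omega
    have hL2' : L2 = (revMat 1 L).map ρ := by
      funext p q
      show (Lℂ p q).reflect 1 = ρ ((L p q).reflect 1)
      rw [hρdef]
      exact (exReflectMap _ _ _).symm
    have hPc2' : Pc2 = (revMat k Pcℝ).map ρ := by
      funext r s
      show (Pcℂ r s).reflect k = ρ ((Pcℝ r s).reflect k)
      rw [hρdef]
      exact (exReflectMap _ _ _).symm
    have h1₂ : L2 * exVI n k Θ2 = exVI n k (fun i => C (vℂ i)) * Pc2 := by
      funext p s
      have step1 : (L2 * exVI n k Θ2) p s = ((Lℂ * exVI n k Θ1) p s).reflect k := by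
        rw [Matrix.mul_apply, Matrix.mul_apply, exReflectSum]
        apply Finset.sum_congr rfl
        intro q _
        show (Lℂ p q).reflect 1 * exVI n k Θ2 q s = (Lℂ p q * exVI n k Θ1 q s).reflect k
        by_cases hqs : q.2 = s
        · have hlhs : exVI n k Θ2 q s = (Θ1 q.1).reflect (k - 1) := by simp [exVI, hqs, hΘ2def]
          have hrhs : exVI n k Θ1 q s = Θ1 q.1 := by simp [exVI, hqs]
          have hm := Polynomial.reflect_mul (Lℂ p q) (Θ1 q.1) (hLdeg p q) (hΘ1deg q.1)
          rw [hk1] at hm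
          rw [hlhs, hrhs, hm]
        · have hlhs : exVI n k Θ2 q s = 0 := by simp [exVI, hqs]
          have hrhs : exVI n k Θ1 q s = 0 := by simp [exVI, hqs]
          rw [hlhs, hrhs, mul_zero, mul_zero, Polynomial.reflect_zero]
      rw [step1, h1ℂ, exVI_mul_apply, Polynomial.reflect_C_mul, exVI_mul_apply]
      rfl
    have h2₂ : (exVI n k Θ2)ᵀ * L2 = Pc2 * (exVI n k (fun i => C (vℂ i)))ᵀ := by
      funext s q
      have step1 : ((exVI n k Θ2)ᵀ * L2) s q = (((exVI n k Θ1)ᵀ * Lℂ) s q).reflect k := by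
        rw [Matrix.mul_apply, Matrix.mul_apply, exReflectSum]
        apply Finset.sum_congr rfl
        intro p _
        show (exVI n k Θ2)ᵀ s p * (Lℂ p q).reflect 1
            = ((exVI n k Θ1)ᵀ s p * Lℂ p q).reflect k
        show exVI n k Θ2 p s * (Lℂ p q).reflect 1
            = (exVI n k Θ1 p s * Lℂ p q).reflect k
        by_cases hps : p.2 = s
        · have hlhs : exVI n k Θ2 p s = (Θ1 p.1).reflect (k - 1) := by simp [exVI, hps, hΘ2def]
          have hrhs : exVI n k Θ1 p s = Θ1 p.1 := by simp [exVI, hps]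
          have hk1' : (k - 1) + 1 = k := by omega
          have hm := Polynomial.reflect_mul (exVI n k Θ1 p s) (Lℂ p q)
            (le_trans (le_of_eq (congrArg natDegree hrhs)) (hΘ1deg p.1)) (hLdeg p q)
          rw [hk1'] at hm
          rw [hlhs, hrhs] at *
          rw [hm]
        · have hlhs : exVI n k Θ2 p s = 0 := by simp [exVI, hps]
          have hrhs : exVI n k Θ1 p s = 0 := by simp [exVI, hps]
          rw [hlhs, hrhs, zero_mul, zero_mul, Polynomial.reflect_zero]
      rw [step1, h2ℂ, exMul_VIT_apply, exMul_VIT_apply]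
      show (Pcℂ s q.2 * C (vℂ q.1)).reflect k = Pc2 s q.2 * C (vℂ q.1)
      rw [mul_comm, Polynomial.reflect_C_mul, mul_comm]
      rfl
    obtain ⟨U2, V2, ⟨cu2, hcu2, hU2⟩, ⟨cv2, hcv2, hV2⟩, hUV2⟩ := hstrong.2
    have hUV2ℂ : (U2.map ρ) * L2 * (V2.map ρ) = exDiag n k Pc2 := by
      have := congrArg (fun M => M.map ρ) hUV2
      simp only [Matrix.map_mul (f := ρ)] at this
      rw [hL2', hPc2']
      rw [this]
      show (diagPI n k (revMat k Pcℝ)).map ρ = _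
      have hdg : diagPI n k (revMat k Pcℝ) = exDiag n k (revMat k Pcℝ) := rfl
      rw [hdg, exDiag_map]
    have hPc2det : Pc2.det ≠ 0 := by
      have hg : X * Pcℂ.det ≠ 0 := mul_ne_zero Polynomial.X_ne_zero hregℂ
      obtain ⟨x, hx⟩ := (Set.Finite.infinite_compl
        (Polynomial.finite_setOf_isRoot hg)).nonempty
      have hxval : eval x (X * Pcℂ.det) ≠ 0 := hx
      rw [Polynomial.eval_mul, Polynomial.eval_X] at hxval
      have hxne : x ≠ 0 := fun h => hxval (by rw [h, zero_mul])
      have hxd : eval x Pcℂ.det ≠ 0 := fun h => hxval (by rw [h, mul_zero])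
      set z := x⁻¹ with hzdef
      have hz : z ≠ 0 := inv_ne_zero hxne
      intro h0
      have hmat : Pc2.map (eval z) = (z ^ k) • (Pcℂ.map (eval x)) := by
        ext r s
        show eval z ((Pcℂ r s).reflect k) = (z ^ k) • (eval x (Pcℂ r s))
        rw [exEvalReflect _ _ (hPdeg r s) z hz, hzdef, inv_inv]
        rfl
      have hev2 : eval z Pc2.det = (Pc2.map (eval z)).det := by
        have h := RingHom.map_det (Polynomial.evalRingHom z) Pc2
        simpa [RingHom.mapMatrix_apply, Polynomial.coe_evalRingHom] using h
      rw [h0, Polynomial.eval_zero] at hev2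
      rw [hmat, Matrix.det_smul] at hev2
      have hdet3 : (Pcℂ.map (eval x)).det = eval x Pcℂ.det := by
        have h := RingHom.map_det (Polynomial.evalRingHom x) Pcℂ
        simpa [RingHom.mapMatrix_apply, Polynomial.coe_evalRingHom] using h.symm
      rw [hdet3] at hev2
      exact absurd hev2.symm
        (mul_ne_zero (pow_ne_zero _ (pow_ne_zero _ hz)) hxd)
    have hsing2 : (Pc2.map (eval 0)).det = 0 := by
      rw [hPc2', hevalC]
      exact hα0
    have hcoeff : ∀ j : Fin k, eval 0 (Θ2 j)
        = (algebraMap ℝ ℂ) ((φ (k - 1 - j.val)).coeff (k - 1)) := by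
      intro j
      rw [← Polynomial.coeff_zero_eq_eval_zero]
      simp only [hΘ2def, hΘ1def, hρdef, Polynomial.coeff_reflect]
      rw [Polynomial.revAt_le (Nat.zero_le _), Nat.sub_zero]
      simp [Polynomial.coeff_map]
    have hθ2 : eval 0 (Θ2 ⟨0, hk0⟩) ≠ 0 := by
      rw [hcoeff ⟨0, hk0⟩]
      apply hcast
      show (φ (k - 1 - 0)).coeff (k - 1) ≠ 0
      rw [Nat.sub_zero, (hφdeg (k - 1)).2]
      apply inv_ne_zero
      exact Finset.prod_ne_zero_iff.mpr (fun i _ => ha i)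
    refine exCore n k hn hk0 Pc2 L2 Θ2 vℂ h1₂ h2₂ (U2.map ρ) (V2.map ρ)
      ((algebraMap ℝ ℂ) cu2) ((algebraMap ℝ ℂ) cv2) (hcast _ hcu2) (hcast _ hcv2)
      (hdetmap _ _ hU2) (hdetmap _ _ hV2) hUV2ℂ hPc2det 0 hsing2 ⟨0, hk0⟩ hθ2 ?_
    rw [Polynomial.eval_finset_sum]
    apply Finset.sum_eq_zero
    intro i _
    rw [Polynomial.eval_mul, Polynomial.eval_C]
    by_cases hi : i = (⟨0, hk0⟩ : Fin k)
    · subst hi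
      have : vℂ ⟨0, hk0⟩ = 0 := by
        rw [hvℂdef]
        simp only
        rw [hv0]
        exact map_zero _
      rw [this, zero_mul]
    · have hival : 0 < i.val := by
        rcases Nat.eq_zero_or_pos i.val with h | h
        · exact absurd (Fin.ext h) hi
        · exact h
      have hzz : eval 0 (Θ2 i) = 0 := by
        rw [hcoeff i]
        have : (φ (k - 1 - i.val)).coeff (k - 1) = 0 := by
          apply Polynomial.coeff_eq_zero_of_natDegree_lt
          have := (hφdeg (k - 1 - i.val)).1
          omega
        rw [this, map_zero]
      rw [hzz, mul_zero]
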